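/- Let (ℝⁿ, *_G) be a rational stratified Lie group of step s > 1. Then the identity map Id : (ℝⁿ, d_{B(G)}) → (ℝⁿ, d_{B(ℝⁿ)}) is not a quasi-isometry; consequently the dyadic covering B(G) is not equivalent to the Euclidean dyadic covering B(ℝⁿ). Concretely, the points p(m) = (2^m, 0, …, 0) and q(m) = (0, …, 0, 2^{sm+1}) satisfy d_{B(G)}(p(m), q(m)) = 1 for all m ∈ ℕ while d_{B(ℝⁿ)}(p(m), q(m)) → ∞ as m → ∞. -/

import Mathlib

open MeasureTheory

/-- The dilations of a stratified Lie group realized on `ℝⁿ` in coordinates adapted to the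
stratification: coordinate `j` has degree `v j` and scales as `r ^ v j`. -/
def dil {n : ℕ} (v : Fin n → ℕ) (r : ℝ) (x : Fin n → ℝ) : Fin n → ℝ :=
  fun j => r ^ v j * x j

/-- A stratified Lie group realized on `ℝⁿ` through the exponential map: a Lie group
structure `*_G` on `ℝⁿ` with identity `0`, together with degrees `deg j ≥ 1` of the
coordinates (adapted to the stratification) such that the associated dilations are group
automorphisms. -/
structure StratifiedGroup (n : ℕ) where
  mul : (Fin n → ℝ) → (Fin n → ℝ) → (Fin n → ℝ)
  inv : (Fin n → ℝ) → (Fin n → ℝ)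
  mul_assoc' : ∀ x y z, mul (mul x y) z = mul x (mul y z)
  zero_mul' : ∀ x, mul 0 x = x
  mul_zero' : ∀ x, mul x 0 = x
  inv_mul' : ∀ x, mul (inv x) x = 0
  continuous_mul' : Continuous fun p : (Fin n → ℝ) × (Fin n → ℝ) => mul p.1 p.2
  continuous_inv' : Continuous inv
  deg : Fin n → ℕ
  deg_pos : ∀ j, 1 ≤ deg j
  dil_mul : ∀ r : ℝ, 0 < r → ∀ x y, dil deg r (mul x y) = mul (dil deg r x) (dil deg r y)

/-- The homogeneous dimension `Q = ∑ j deg j` of a stratified group. -/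
def StratifiedGroup.Q {n : ℕ} (S : StratifiedGroup n) : ℕ := ∑ j, S.deg j

/-- A homogeneous quasi-norm on a stratified Lie group: a continuous, nonnegative,
`1`-homogeneous (for the dilations), symmetric function vanishing exactly at the identity. -/
structure IsQuasiNorm {n : ℕ} (S : StratifiedGroup n) (N : (Fin n → ℝ) → ℝ) : Prop where
  continuous : Continuous N
  nonneg : ∀ x, 0 ≤ N x
  homogeneous : ∀ r : ℝ, 0 < r → ∀ x, N (dil S.deg r x) = r * N x
  symm : ∀ x, N (S.inv x) = N x
  eq_zero_iff : ∀ x, N x = 0 ↔ x = 0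

/-- The quasi-ball `B(c, R) = {h : ‖c⁻¹ *_G h‖ < R}`. -/
def qBall {n : ℕ} (S : StratifiedGroup n) (N : (Fin n → ℝ) → ℝ)
    (c : Fin n → ℝ) (R : ℝ) : Set (Fin n → ℝ) :=
  {h | N (S.mul (S.inv c) h) < R}

/-- The homogeneous quasi-norm `‖x‖₂ = (∑ⱼ |xⱼ|^{2/vⱼ})^{1/2}` adapted to the degrees `v`. -/
noncomputable def nrm2 {n : ℕ} (v : Fin n → ℕ) (x : Fin n → ℝ) : ℝ :=
  (∑ j, |x j| ^ ((2 : ℝ) / (v j : ℝ))) ^ ((1 : ℝ) / 2)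

/-- The members of the Besov covering `𝓑(G)`: `D₀(G) = B^{‖·‖₂}(0,2)` and, for `m ≥ 1`,
the dyadic annuli `D_m(G) = B^{‖·‖₂}(0, 2^{m+1}) \ closure (B^{‖·‖₂}(0, 2^{m-1}))`. -/
noncomputable def besovSet {n : ℕ} (S : StratifiedGroup n) (m : ℕ) : Set (Fin n → ℝ) :=
  if m = 0 then {x | nrm2 S.deg x < 2}
  else {x | nrm2 S.deg x < 2 ^ (m + 1)} \ closure {x | nrm2 S.deg x < 2 ^ (m - 1)}

/-- A chain of `k+1` members of the covering `Qc` from `x` to `y`, with consecutive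
members intersecting. -/
def HasChain {V : Type*} {I : Type*} (Qc : I → Set V) (x y : V) (k : ℕ) : Prop :=
  ∃ c : Fin (k + 1) → I, x ∈ Qc (c 0) ∧ y ∈ Qc (c (Fin.last k)) ∧
    ∀ l : Fin k, (Qc (c l.castSucc) ∩ Qc (c l.succ)).Nonempty

open Classical in
/-- The metric `d_Q` associated to a concatenation: the minimal length of a chain of
members of the covering joining `x` to `y` (and `0` if `x = y`). -/
noncomputable def chainDist {V : Type*} {I : Type*} (Qc : I → Set V) (x y : V) : ℕ :=
  if x = y then 0 else 1 + sInf {k : ℕ | HasChain Qc x y k}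

/-- The Euclidean dyadic (Besov) covering of `ℝⁿ`. -/
noncomputable def besovSetE (n : ℕ) (m : ℕ) : Set (Fin n → ℝ) :=
  if m = 0 then {x | Real.sqrt (∑ j, x j ^ 2) < 2}
  else {x | Real.sqrt (∑ j, x j ^ 2) < 2 ^ (m + 1)}
    \ closure {x | Real.sqrt (∑ j, x j ^ 2) < 2 ^ (m - 1)}

/-- The point `p(m) = (2^m, 0, …, 0)`. -/
noncomputable def pPt (n m : ℕ) : Fin n → ℝ :=
  fun j => if (j : ℕ) = 0 then (2 : ℝ) ^ m else 0

/-- The point `q(m) = (0, …, 0, 2^{sm+1})`. -/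
noncomputable def qPt (n s m : ℕ) : Fin n → ℝ :=
  fun j => if (j : ℕ) = n - 1 then (2 : ℝ) ^ (s * m + 1) else 0


noncomputable def nE {n : ℕ} (x : Fin n → ℝ) : ℝ := Real.sqrt (∑ j, x j ^ 2)

lemma aux_continuous_nE {n : ℕ} : Continuous (nE (n := n)) :=
  Real.continuous_sqrt.comp (continuous_finset_sum _ fun j _ => (continuous_apply j).pow 2)

lemma aux_nE_single {n : ℕ} (j0 : Fin n) (t : ℝ) (ht : 0 ≤ t) :
    nE (n := n) (fun j => if (j : ℕ) = (j0 : ℕ) then t else 0) = t := by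
  unfold nE
  rw [Finset.sum_eq_single j0]
  · simp [Real.sqrt_sq ht]
  · intro b _ hb
    simp [Fin.val_eq_val, hb]
  · simp

lemma aux_nE_smul {n : ℕ} (t : ℝ) (x : Fin n → ℝ) : nE (fun j => t * x j) = |t| * nE x := by
  unfold nE
  have : ∑ j, (t * x j) ^ 2 = t ^ 2 * ∑ j, x j ^ 2 := by
    rw [Finset.mul_sum]; congr 1; ext j; ring
  simp only [this]
  rw [Real.sqrt_mul (sq_nonneg t), Real.sqrt_sq_eq_abs]

lemma aux_closure_subset {n : ℕ} (N : (Fin n → ℝ) → ℝ) (hN : Continuous N) (R : ℝ) :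
    closure {x | N x < R} ⊆ {x | N x ≤ R} :=
  by
  apply closure_minimal _ (isClosed_le hN continuous_const)
  intro x hx
  simp only [Set.mem_setOf_eq] at hx ⊢
  exact le_of_lt hx

lemma aux_mem_closure {n : ℕ} (x : Fin n → ℝ) (R : ℝ) (hR : 0 < R) (hx : nE x ≤ R) :
    x ∈ closure {y : Fin n → ℝ | nE y < R} := by
  have hf : Filter.Tendsto (fun t : ℝ => fun j => t * x j) (nhdsWithin 1 (Set.Iio 1)) (nhds x) := by
    have hc : Continuous (fun t : ℝ => fun j : Fin n => t * x j) := by continuity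
    have h1 := hc.tendsto 1
    simp only [one_mul] at h1
    exact h1.mono_left nhdsWithin_le_nhds
  refine mem_closure_of_tendsto hf ?_
  filter_upwards [Ioo_mem_nhdsLT_of_mem (by norm_num : (1:ℝ) ∈ Set.Ioc 0 1)] with t ht
  have h0 : 0 < t := ht.1
  have h1 : t < 1 := ht.2
  show nE (fun j => t * x j) < R
  rw [aux_nE_smul, abs_of_pos h0]
  calc t * nE x ≤ t * R := by nlinarith [Real.sqrt_nonneg (∑ j, x j ^ 2)]
    _ < R := by nlinarith

lemma aux_besovSetE_bounds {n : ℕ} (a : ℕ) (x : Fin n → ℝ) (hx : x ∈ besovSetE n a) :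
    nE x < 2 ^ (a + 1) ∧ (1 ≤ a → (2 : ℝ) ^ (a - 1) < nE x) := by
  unfold besovSetE at hx
  by_cases h : a = 0
  · subst h
    rw [if_pos rfl] at hx
    refine ⟨by simpa [pow_one, nE] using hx, by omega⟩
  · rw [if_neg h] at hx
    obtain ⟨h1, h2⟩ := hx
    refine ⟨h1, fun _ => ?_⟩
    by_contra hle
    push_neg at hle
    exact h2 (aux_mem_closure x _ (by positivity) hle)

lemma aux_mem_besovSetE {n : ℕ} (a : ℕ) (x : Fin n → ℝ)
    (h1 : nE x < 2 ^ (a + 1)) (h2 : a = 0 ∨ (2 : ℝ) ^ (a - 1) < nE x) :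
    x ∈ besovSetE n a := by
  unfold besovSetE
  by_cases h : a = 0
  · subst h
    rw [if_pos rfl]
    simpa [pow_one, nE] using h1
  · rw [if_neg h]
    rcases h2 with h2 | h2
    · exact absurd h2 h
    refine ⟨h1, fun hc => ?_⟩
    have := aux_closure_subset nE aux_continuous_nE ((2:ℝ) ^ (a-1)) hc
    exact absurd h2 (not_lt.2 this)

lemma aux_intersectE {n : ℕ} (a b : ℕ) (h : (besovSetE n a ∩ besovSetE n b).Nonempty) :
    b ≤ a + 1 := by
  obtain ⟨z, hza, hzb⟩ := h
  rcases Nat.eq_zero_or_pos b with hb | hb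
  · omega
  have h1 := (aux_besovSetE_bounds a z hza).1
  have h2 := (aux_besovSetE_bounds b z hzb).2 hb
  have h3 : (2 : ℝ) ^ (b - 1) < 2 ^ (a + 1) := lt_trans h2 h1
  have h4 : b - 1 < a + 1 := by
    by_contra hc
    push_neg at hc
    exact absurd h3 (not_lt.2 (pow_le_pow_right₀ (by norm_num) hc))
  omega

lemma aux_nE_pPt (n m : ℕ) (hn : 1 < n) : nE (pPt n m) = 2 ^ m := by
  have := aux_nE_single (n := n) ⟨0, Nat.zero_lt_of_lt hn⟩ ((2:ℝ) ^ m) (by positivity)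
  exact this

lemma aux_nE_qPt (n s m : ℕ) (hn : 1 < n) : nE (qPt n s m) = 2 ^ (s * m + 1) := by
  have := aux_nE_single (n := n) ⟨n - 1, Nat.sub_lt (Nat.zero_lt_of_lt hn) Nat.one_pos⟩ ((2:ℝ) ^ (s * m + 1)) (by positivity)
  exact this

lemma aux_pow_lt (a b : ℕ) (h : (2 : ℝ) ^ a < 2 ^ b) : a < b := by
  by_contra hc
  push_neg at hc
  exact absurd h (not_lt.2 (pow_le_pow_right₀ one_le_two hc))

lemma aux_chain_bound {n : ℕ} {x y : Fin n → ℝ} {k : ℕ}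
    (h : HasChain (besovSetE n) x y k) :
    ∃ a b : ℕ, x ∈ besovSetE n a ∧ y ∈ besovSetE n b ∧ b ≤ a + k := by
  obtain ⟨c, hx, hy, hl⟩ := h
  refine ⟨c 0, c (Fin.last k), hx, hy, ?_⟩
  have key : ∀ i : ℕ, ∀ hi : i ≤ k, c ⟨i, by omega⟩ ≤ c 0 + i := by
    intro i
    induction i with
    | zero => intro _; simp [show (⟨0, by omega⟩ : Fin (k+1)) = 0 from rfl]
    | succ i ih =>
      intro hi
      have h1 := ih (by omega)
      have h2 := aux_intersectE _ _ (hl ⟨i, by omega⟩)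
      simp only [Fin.castSucc_mk, Fin.succ_mk] at h2
      omega
  have := key k le_rfl
  simpa [Fin.last] using this

lemma aux_wpt_mem (n a : ℕ) (hn : 0 < n) :
    (fun j : Fin n => if (j : ℕ) = 0 then (3 : ℝ) / 2 * 2 ^ a else 0) ∈
      besovSetE n a ∩ besovSetE n (a + 1) := by
  have hpos : (0 : ℝ) < 2 ^ a := by positivity
  have hne : nE (fun j : Fin n => if (j : ℕ) = 0 then (3 : ℝ) / 2 * 2 ^ a else 0)
      = 3 / 2 * 2 ^ a := by
    have := aux_nE_single (n := n) ⟨0, hn⟩ ((3 : ℝ) / 2 * 2 ^ a) (by positivity)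
    simpa using this
  have hle : (2 : ℝ) ^ (a - 1) ≤ 2 ^ a := pow_le_pow_right₀ one_le_two (by omega)
  constructor
  · refine aux_mem_besovSetE _ _ ?_ (Or.inr ?_)
    · rw [hne, pow_succ]; nlinarith
    · rw [hne]; nlinarith
  · refine aux_mem_besovSetE _ _ ?_ (Or.inr ?_)
    · rw [hne, pow_succ, pow_succ]; nlinarith
    · rw [hne]
      simp only [Nat.add_sub_cancel]
      nlinarith

lemma aux_pPt_memE (n m : ℕ) (hn : 1 < n) : pPt n m ∈ besovSetE n m := by
  refine aux_mem_besovSetE _ _ ?_ ?_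
  · rw [aux_nE_pPt n m hn, pow_succ]
    have : (0:ℝ) < 2 ^ m := by positivity
    nlinarith
  · rcases Nat.eq_zero_or_pos m with h0 | h0
    · exact Or.inl h0
    · right
      obtain ⟨t, rfl⟩ : ∃ t, m = t + 1 := ⟨m - 1, by omega⟩
      rw [aux_nE_pPt n (t+1) hn, pow_succ, Nat.add_sub_cancel]
      have : (0:ℝ) < 2 ^ t := by positivity
      nlinarith

lemma aux_qPt_memE (n s m : ℕ) (hn : 1 < n) : qPt n s m ∈ besovSetE n (s * m + 1) := by
  refine aux_mem_besovSetE _ _ ?_ (Or.inr ?_)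
  · rw [aux_nE_qPt n s m hn]
    have h2 : (2:ℝ) ^ (s * m + 1 + 1) = 2 ^ (s * m + 1) * 2 := pow_succ _ _
    have : (0:ℝ) < 2 ^ (s * m + 1) := by positivity
    nlinarith
  · rw [aux_nE_qPt n s m hn, Nat.add_sub_cancel, pow_succ]
    have : (0:ℝ) < 2 ^ (s * m) := by positivity
    nlinarith

lemma aux_E_chain_ex (n s m : ℕ) (hn : 1 < n) (hs : 2 ≤ s) :
    HasChain (besovSetE n) (pPt n m) (qPt n s m) ((s - 1) * m + 1) := by
  obtain ⟨t, rfl⟩ : ∃ t, s = t + 2 := ⟨s - 2, by omega⟩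
  refine ⟨fun l => m + (l : ℕ), ?_, ?_, ?_⟩
  · simpa using aux_pPt_memE n m hn
  · have hval : m + ((Fin.last ((t + 2 - 1) * m + 1) : Fin _) : ℕ) = (t + 2) * m + 1 := by
      rw [Fin.val_last]
      show m + ((t + 1) * m + 1) = (t + 2) * m + 1
      ring
    show qPt n (t + 2) m ∈ besovSetE n (m + ((Fin.last ((t + 2 - 1) * m + 1) : Fin _) : ℕ))
    rw [hval]
    exact aux_qPt_memE n (t + 2) m hn
  · intro l
    refine ⟨fun j : Fin n => if (j : ℕ) = 0 then (3 : ℝ) / 2 * 2 ^ (m + (l : ℕ)) else 0, ?_, ?_⟩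
    · have := (aux_wpt_mem n (m + (l : ℕ)) (by omega)).1
      simpa using this
    · have := (aux_wpt_mem n (m + (l : ℕ)) (by omega)).2
      have hv : m + ((l.succ : Fin _) : ℕ) = m + (l : ℕ) + 1 := by
        simp [Fin.val_succ]; ring
      simpa [hv, Nat.add_assoc] using this

lemma aux_E_chain_lb (n s m k : ℕ) (hn : 1 < n) (hs : 2 ≤ s)
    (h : HasChain (besovSetE n) (pPt n m) (qPt n s m) k) : m + 1 ≤ k := by
  obtain ⟨a, b, hp, hq, hab⟩ := aux_chain_bound h
  have hpb := (aux_besovSetE_bounds a _ hp).2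
  have hqb := (aux_besovSetE_bounds b _ hq).1
  rw [aux_nE_qPt n s m hn] at hqb
  have ha : a ≤ m := by
    rcases Nat.eq_zero_or_pos a with h0 | h0
    · omega
    · have := hpb h0
      rw [aux_nE_pPt n m hn] at this
      have := aux_pow_lt _ _ this
      omega
  have hb : s * m + 1 < b + 1 := aux_pow_lt _ _ hqb
  have h2m : 2 * m ≤ s * m := Nat.mul_le_mul_right m hs
  omega

lemma aux_pq_ne (n s m : ℕ) (hn : 1 < n) : pPt n m ≠ qPt n s m := by
  intro h
  have h0 := congrFun h ⟨0, Nat.zero_lt_of_lt hn⟩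
  have hne : ¬((0 : ℕ) = n - 1) := by omega
  simp only [pPt, qPt] at h0
  rw [if_neg hne] at h0
  norm_num at h0

lemma aux_E_chainDist_lb (n s m : ℕ) (hn : 1 < n) (hs : 2 ≤ s) :
    m ≤ chainDist (besovSetE n) (pPt n m) (qPt n s m) := by
  unfold chainDist
  rw [if_neg (aux_pq_ne n s m hn)]
  have h1 : m + 1 ≤ sInf {k | HasChain (besovSetE n) (pPt n m) (qPt n s m) k} :=
    le_csInf ⟨(s - 1) * m + 1, aux_E_chain_ex n s m hn hs⟩
      (fun k hk => aux_E_chain_lb n s m k hn hs hk)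
  omega

lemma aux_continuous_nrm2 {n : ℕ} (v : Fin n → ℕ) (hv : ∀ j, 1 ≤ v j) :
    Continuous (nrm2 v) := by
  unfold nrm2
  have hs : Continuous fun x : Fin n → ℝ => ∑ j, |x j| ^ ((2 : ℝ) / (v j : ℝ)) := by
    refine continuous_finset_sum _ fun j _ => ?_
    have hvj : (0 : ℝ) < (v j : ℝ) := by exact_mod_cast hv j
    have hrc : Continuous fun y : ℝ => y ^ ((2 : ℝ) / (v j : ℝ)) := by
      rw [continuous_iff_continuousAt]
      intro y
      exact Real.continuousAt_rpow_const y _ (Or.inr (by positivity))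
    exact hrc.comp (continuous_apply j).abs
  have hrc2 : Continuous fun y : ℝ => y ^ ((1 : ℝ) / 2) := by
    rw [continuous_iff_continuousAt]
    intro y
    exact Real.continuousAt_rpow_const y _ (Or.inr (by norm_num))
  exact hrc2.comp hs

lemma aux_nrm2_single {n : ℕ} (v : Fin n → ℕ) (hv : ∀ j, 1 ≤ v j) (j0 : Fin n)
    (t : ℝ) (ht : 0 ≤ t) :
    nrm2 v (fun j => if (j : ℕ) = (j0 : ℕ) then t else 0) = t ^ ((1 : ℝ) / (v j0 : ℝ)) := by
  unfold nrm2
  rw [Finset.sum_eq_single j0]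
  · beta_reduce
    rw [if_pos rfl, abs_of_nonneg ht, ← Real.rpow_mul ht]
    congr 1
    ring
  · intro b _ hb
    beta_reduce
    rw [if_neg (by simpa [Fin.val_eq_val] using hb), abs_zero, Real.zero_rpow]
    have hvb : (0 : ℝ) < (v b : ℝ) := by exact_mod_cast hv b
    positivity
  · simp

lemma aux_mem_besovSetG {n : ℕ} (S : StratifiedGroup n) (m : ℕ) (x : Fin n → ℝ)
    (h1 : nrm2 S.deg x < 2 ^ (m + 1))
    (h2 : m = 0 ∨ (2 : ℝ) ^ (m - 1) < nrm2 S.deg x) :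
    x ∈ besovSet S m := by
  unfold besovSet
  by_cases h : m = 0
  · subst h
    rw [if_pos rfl]
    simpa [pow_one] using h1
  · rw [if_neg h]
    rcases h2 with h2 | h2
    · exact absurd h2 h
    refine ⟨h1, fun hc => ?_⟩
    have := aux_closure_subset (nrm2 S.deg) (aux_continuous_nrm2 S.deg S.deg_pos)
      ((2:ℝ) ^ (m - 1)) hc
    exact absurd h2 (not_lt.2 this)

lemma aux_nrm2_pPt {n : ℕ} (hn : 1 < n) (S : StratifiedGroup n)
    (hdeg1 : S.deg ⟨0, Nat.zero_lt_of_lt hn⟩ = 1) (m : ℕ) :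
    nrm2 S.deg (pPt n m) = 2 ^ m := by
  have := aux_nrm2_single S.deg S.deg_pos ⟨0, Nat.zero_lt_of_lt hn⟩ ((2:ℝ) ^ m) (by positivity)
  simp only [hdeg1, Nat.cast_one, div_one, Real.rpow_one] at this
  convert this using 2
  exact rfl

lemma aux_pq_memG {n : ℕ} (hn : 1 < n) (S : StratifiedGroup n)
    (hdeg1 : S.deg ⟨0, Nat.zero_lt_of_lt hn⟩ = 1) (hstep : 2 ≤ S.deg ⟨n - 1, Nat.sub_lt (Nat.zero_lt_of_lt hn) Nat.one_pos⟩) (m : ℕ) :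
    pPt n m ∈ besovSet S m ∧ qPt n (S.deg ⟨n - 1, Nat.sub_lt (Nat.zero_lt_of_lt hn) Nat.one_pos⟩) m ∈ besovSet S m := by
  set s := S.deg ⟨n - 1, Nat.sub_lt (Nat.zero_lt_of_lt hn) Nat.one_pos⟩ with hsdef
  have hs0 : (0:ℝ) < (s:ℝ) := by
    have : 0 < s := by omega
    exact_mod_cast this
  have hsr : (2:ℝ) ≤ (s:ℝ) := by exact_mod_cast hstep
  have hq : nrm2 S.deg (qPt n s m) = ((2:ℝ) ^ (s * m + 1 : ℕ)) ^ ((1:ℝ)/(s:ℝ)) := by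
    have := aux_nrm2_single S.deg S.deg_pos ⟨n - 1, Nat.sub_lt (Nat.zero_lt_of_lt hn) Nat.one_pos⟩ ((2:ℝ) ^ (s * m + 1))
      (by positivity)
    convert this using 2
    exact rfl
  have key : ∀ a b : ℕ, ((a : ℝ) * (s:ℝ) < (s * m + 1 : ℕ) → (2:ℝ) ^ (a : ℕ) < nrm2 S.deg (qPt n s m)) ∧
      (((s * m + 1 : ℕ) : ℝ) < (b : ℝ) * (s:ℝ) → nrm2 S.deg (qPt n s m) < (2:ℝ) ^ (b : ℕ)) := by
    intro a b
    rw [hq, ← Real.rpow_natCast 2 (s * m + 1), ← Real.rpow_mul (by norm_num : (0:ℝ) ≤ 2),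
      ← Real.rpow_natCast 2 a, ← Real.rpow_natCast 2 b]
    constructor
    · intro h
      apply (Real.rpow_lt_rpow_left_iff one_lt_two).mpr
      rw [mul_one_div, lt_div_iff₀ hs0]
      exact h
    · intro h
      apply (Real.rpow_lt_rpow_left_iff one_lt_two).mpr
      rw [mul_one_div, div_lt_iff₀ hs0]
      exact h
  constructor
  · refine aux_mem_besovSetG S m _ ?_ ?_
    · rw [aux_nrm2_pPt hn S hdeg1, pow_succ]
      have : (0:ℝ) < 2 ^ m := by positivity
      nlinarith
    · rcases Nat.eq_zero_or_pos m with h0 | h0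
      · exact Or.inl h0
      · right
        obtain ⟨t, rfl⟩ : ∃ t, m = t + 1 := ⟨m - 1, by omega⟩
        rw [aux_nrm2_pPt hn S hdeg1, pow_succ, Nat.add_sub_cancel]
        have : (0:ℝ) < 2 ^ t := by positivity
        nlinarith
  · refine aux_mem_besovSetG S m _ ?_ ?_
    · apply (key 0 (m + 1)).2
      push_cast
      nlinarith [Nat.cast_nonneg (α := ℝ) m]
    · rcases Nat.eq_zero_or_pos m with h0 | h0
      · exact Or.inl h0
      · right
        obtain ⟨t, rfl⟩ : ∃ t, m = t + 1 := ⟨m - 1, by omega⟩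
        rw [Nat.add_sub_cancel]
        apply (key t (t + 2)).1
        push_cast
        nlinarith [Nat.cast_nonneg (α := ℝ) t]

lemma aux_G_chainDist {n : ℕ} (hn : 1 < n) (S : StratifiedGroup n)
    (hdeg1 : S.deg ⟨0, Nat.zero_lt_of_lt hn⟩ = 1) (hstep : 2 ≤ S.deg ⟨n - 1, Nat.sub_lt (Nat.zero_lt_of_lt hn) Nat.one_pos⟩) (m : ℕ) :
    chainDist (besovSet S) (pPt n m) (qPt n (S.deg ⟨n - 1, Nat.sub_lt (Nat.zero_lt_of_lt hn) Nat.one_pos⟩) m) = 1 := by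
  unfold chainDist
  rw [if_neg (aux_pq_ne n _ m hn)]
  have hmem := aux_pq_memG hn S hdeg1 hstep m
  have h0 : HasChain (besovSet S) (pPt n m) (qPt n (S.deg ⟨n - 1, Nat.sub_lt (Nat.zero_lt_of_lt hn) Nat.one_pos⟩) m) 0 :=
    ⟨fun _ => m, hmem.1, hmem.2, fun l => l.elim0⟩
  have hz : 0 ∈ {k : ℕ | HasChain (besovSet S) (pPt n m)
      (qPt n (S.deg ⟨n - 1, Nat.sub_lt (Nat.zero_lt_of_lt hn) Nat.one_pos⟩) m) k} := Set.mem_setOf_eq ▸ h0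
  rw [Nat.sInf_eq_zero.2 (Or.inl hz)]
set_option maxHeartbeats 800000 in
/-- For a stratified Lie group of step `s > 1` (coordinates ordered with
nondecreasing degrees, first coordinate of degree `1`, last of degree `s ≥ 2`), the points
`p(m) = (2^m,0,…,0)` and `q(m) = (0,…,0,2^{sm+1})` are at `d_{𝓑(G)}`-distance `1` for all
`m`, while their `d_{𝓑(ℝⁿ)}`-distance tends to `∞`; consequently the identity map
`(ℝⁿ, d_{𝓑(G)}) → (ℝⁿ, d_{𝓑(ℝⁿ)})` is not a quasi-isometry, i.e. the two dyadic coverings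
are not equivalent. -/
theorem besov_coverings_not_quasi_isometric {n : ℕ} (hn : 1 < n)
    (S : StratifiedGroup n) (hmono : Monotone S.deg)
    (hdeg1 : S.deg ⟨0, by omega⟩ = 1)
    (hstep : 2 ≤ S.deg ⟨n - 1, by omega⟩) :
    (∀ m : ℕ,
      chainDist (besovSet S) (pPt n m) (qPt n (S.deg ⟨n - 1, by omega⟩) m) = 1) ∧
    Filter.Tendsto
      (fun m : ℕ =>
        chainDist (besovSetE n) (pPt n m) (qPt n (S.deg ⟨n - 1, by omega⟩) m))
      Filter.atTop Filter.atTop ∧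
    ¬ ∃ Lc Cc : ℝ, 0 < Lc ∧ 0 ≤ Cc ∧ ∀ x y : Fin n → ℝ,
        (chainDist (besovSet S) x y : ℝ) / Lc - Cc ≤ (chainDist (besovSetE n) x y : ℝ) ∧
        (chainDist (besovSetE n) x y : ℝ) ≤ Lc * (chainDist (besovSet S) x y : ℝ) + Cc := by

  have hT : Filter.Tendsto
      (fun m : ℕ => chainDist (besovSetE n) (pPt n m) (qPt n (S.deg ⟨n - 1, by omega⟩) m))
      Filter.atTop Filter.atTop :=
    by
    apply Filter.tendsto_atTop_mono
      (fun m => aux_E_chainDist_lb n (S.deg ⟨n - 1, by omega⟩) m hn hstep)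
    exact Filter.tendsto_id
  refine ⟨fun m => aux_G_chainDist hn S hdeg1 hstep m, hT, ?_⟩
  rintro ⟨Lc, Cc, hL, hC, hQI⟩
  obtain ⟨m, hm⟩ := (Filter.tendsto_atTop.mp hT (⌈Lc + Cc⌉₊ + 1)).exists
  have h2 := (hQI (pPt n m) (qPt n (S.deg ⟨n - 1, by omega⟩) m)).2
  simp only [aux_G_chainDist hn S hdeg1 hstep m] at h2
  have h3 : ((⌈Lc + Cc⌉₊ + 1 : ℕ) : ℝ) ≤
      (chainDist (besovSetE n) (pPt n m) (qPt n (S.deg ⟨n - 1, by omega⟩) m) : ℝ) :=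
    Nat.cast_le.2 hm
  have h4 := Nat.le_ceil (Lc + Cc)
  push_cast at h2 h3
  linarith
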